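/- arXiv:2406.11159 — 7 statements merged into one kernel-verified Lean document; each statement's English description precedes it below -/
import Mathlib

section
/- Let v > 0 and τ > 0. Every complex solution λ of the characteristic equation λ·exp(λτ) = −v has strictly negative real part if and only if v·τ < π/2. In particular, when v·τ > π/2 there exists a complex root with positive real part (divergence of asynchronous SGD), and when v·τ < π/2 all roots have negative real part (convergence). -/
open Real Complex

lemma lemA (a : ℝ) (ha : 0 < a) (ha2 : a < Real.pi / 2) (μ : ℂ)
    (h : μ * Complex.exp μ = -(a:ℂ)) : μ.re < 0 := by
  by_contra hx
  push_neg at hx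
  set x := μ.re with hxdef
  set y := μ.im with hydef
  have hre : x * (Real.exp x * Real.cos y) - y * (Real.exp x * Real.sin y) = -a := by
    have := congrArg Complex.re h
    simpa [Complex.mul_re, Complex.exp_re, Complex.exp_im] using this
  have him : x * (Real.exp x * Real.sin y) + y * (Real.exp x * Real.cos y) = 0 := by
    have := congrArg Complex.im h
    simpa [Complex.mul_im, Complex.exp_re, Complex.exp_im] using this
  have habs : ‖μ‖ * Real.exp x = a := by
    have := congrArg (fun z : ℂ => ‖z‖) h
    simpa [norm_mul, Complex.norm_exp, norm_neg, Complex.norm_real, Real.norm_eq_abs,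
      abs_of_pos ha] using this
  have hex : (1:ℝ) ≤ Real.exp x := Real.one_le_exp hx
  have habs' : ‖μ‖ ≤ a := by nlinarith [norm_nonneg μ]
  have hy : |y| < Real.pi / 2 :=
    lt_of_le_of_lt (le_trans (Complex.abs_im_le_norm μ) habs') ha2
  obtain ⟨hy1, hy2⟩ := abs_lt.mp hy
  have hcos : 0 < Real.cos y := Real.cos_pos_of_mem_Ioo ⟨hy1, hy2⟩
  have hexp : 0 < Real.exp x := Real.exp_pos x
  rcases lt_trichotomy y 0 with hy0 | hy0 | hy0
  · have hsin : Real.sin y < 0 := by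
      have := Real.sin_pos_of_pos_of_lt_pi (x := -y) (by linarith)
        (by linarith [Real.pi_pos])
      rw [Real.sin_neg] at this; linarith
    have h1 : x * (Real.exp x * Real.sin y) ≤ 0 :=
      mul_nonpos_of_nonneg_of_nonpos hx (by nlinarith)
    have h2 : y * (Real.exp x * Real.cos y) < 0 :=
      mul_neg_of_neg_of_pos hy0 (by positivity)
    linarith
  · rw [hy0] at hre
    simp at hre
    nlinarith
  · have hsin : 0 < Real.sin y :=
      Real.sin_pos_of_pos_of_lt_pi hy0 (by linarith [Real.pi_pos])
    have h1 : 0 ≤ x * (Real.exp x * Real.sin y) := mul_nonneg hx (by positivity)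
    have h2 : 0 < y * (Real.exp x * Real.cos y) := mul_pos hy0 (by positivity)
    linarith


open Real

noncomputable def fB (y : ℝ) : ℝ := Real.exp (-y * Real.cos y / Real.sin y) * (y / Real.sin y)

lemma lemB (a : ℝ) (ha : Real.pi / 2 < a) :
    ∃ μ : ℂ, μ * Complex.exp μ = -(a:ℂ) ∧ 0 < μ.re := by
  have hpi := Real.pi_pos
  have ha0 : 0 < a := lt_trans (by linarith) ha
  -- find y₀ ∈ (π/2, π) with sin y₀ = π/(4a)
  set c : ℝ := Real.pi / (4 * a) with hc
  have hc0 : 0 < c := by positivity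
  have hc1 : c < 1 / 2 := by
    rw [hc, div_lt_div_iff₀ (by positivity) (by norm_num)]
    linarith
  have hsub : Set.Icc (Real.sin Real.pi) (Real.sin (Real.pi/2)) ⊆
      Real.sin '' Set.Icc (Real.pi/2) Real.pi :=
    intermediate_value_Icc' (by linarith) (Real.continuous_sin.continuousOn)
  obtain ⟨y₀, hy₀mem, hy₀⟩ := hsub (by
    rw [Real.sin_pi, Real.sin_pi_div_two]
    exact ⟨hc0.le, by linarith⟩)
  have hy₀1 : Real.pi / 2 < y₀ := by
    rcases eq_or_lt_of_le hy₀mem.1 with h | h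
    · exfalso; rw [← h, Real.sin_pi_div_two] at hy₀; linarith
    · exact h
  have hy₀2 : y₀ < Real.pi := by
    rcases eq_or_lt_of_le hy₀mem.2 with h | h
    · exfalso; rw [h, Real.sin_pi] at hy₀; linarith
    · exact h
  have hcos₀ : Real.cos y₀ < 0 :=
    Real.cos_neg_of_pi_div_two_lt_of_lt hy₀1 (by linarith)
  -- f y₀ ≥ 2a
  have hfy₀ : 2 * a ≤ fB y₀ := by
    have h1 : (1:ℝ) ≤ Real.exp (-y₀ * Real.cos y₀ / Real.sin y₀) := by
      apply Real.one_le_exp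
      apply div_nonneg _ (by rw [hy₀]; exact hc0.le)
      nlinarith
    have h2 : 2 * a ≤ y₀ / Real.sin y₀ := by
      rw [hy₀, le_div_iff₀ hc0, hc]
      have : 2 * a * (Real.pi / (4 * a)) = Real.pi / 2 := by field_simp; ring
      rw [this]; linarith
    have h3 : 0 ≤ y₀ / Real.sin y₀ := by linarith
    calc 2 * a ≤ y₀ / Real.sin y₀ := h2
    _ ≤ Real.exp (-y₀ * Real.cos y₀ / Real.sin y₀) * (y₀ / Real.sin y₀) := by
        nlinarith
    _ = fB y₀ := rfl
  -- continuity of fB on [π/2, y₀]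
  have hsinpos : ∀ z ∈ Set.Icc (Real.pi/2) y₀, 0 < Real.sin z := by
    intro z hz
    exact Real.sin_pos_of_pos_of_lt_pi (by linarith [hz.1]) (by linarith [hz.2])
  have hcont : ContinuousOn fB (Set.Icc (Real.pi/2) y₀) := by
    apply ContinuousOn.mul
    · apply Real.continuous_exp.comp_continuousOn
      exact ContinuousOn.div (by fun_prop) (Real.continuous_sin.continuousOn)
        (fun z hz => (hsinpos z hz).ne')
    · exact ContinuousOn.div continuousOn_id (Real.continuous_sin.continuousOn)
        (fun z hz => (hsinpos z hz).ne')
  have hfhalf : fB (Real.pi/2) = Real.pi/2 := by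
    simp [fB, Real.cos_pi_div_two, Real.sin_pi_div_two]
  have hsub2 : Set.Icc (fB (Real.pi/2)) (fB y₀) ⊆ fB '' Set.Icc (Real.pi/2) y₀ :=
    intermediate_value_Icc (by linarith) hcont
  obtain ⟨y, hymem, hy⟩ := hsub2 (by rw [hfhalf]; exact ⟨ha.le, by linarith⟩)
  have hy1 : Real.pi / 2 < y := by
    rcases eq_or_lt_of_le hymem.1 with h | h
    · exfalso; rw [← h, hfhalf] at hy; linarith
    · exact h
  have hy2 : y < Real.pi := lt_of_le_of_lt hymem.2 hy₀2
  have hsin : 0 < Real.sin y := Real.sin_pos_of_pos_of_lt_pi (by linarith) hy2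
  have hcos : Real.cos y < 0 := Real.cos_neg_of_pi_div_two_lt_of_lt hy1 (by linarith)
  set x : ℝ := -y * Real.cos y / Real.sin y with hxdef
  have hx : 0 < x := by
    apply div_pos _ hsin
    nlinarith
  refine ⟨⟨x, y⟩, ?_, hx⟩
  have hpyth := Real.sin_sq_add_cos_sq y
  have hfval : Real.exp x * (y / Real.sin y) = a := hy
  apply Complex.ext
  · have hkey : x * Real.cos y - y * Real.sin y = -(y / Real.sin y) := by
      rw [hxdef]; field_simp; nlinarith
    have h1 : x * (Real.exp x * Real.cos y) - y * (Real.exp x * Real.sin y) = -a := by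
      calc x * (Real.exp x * Real.cos y) - y * (Real.exp x * Real.sin y)
          = Real.exp x * (x * Real.cos y - y * Real.sin y) := by ring
        _ = -(Real.exp x * (y / Real.sin y)) := by rw [hkey]; ring
        _ = -a := by rw [hfval]
    simpa [Complex.mul_re, Complex.exp_re, Complex.exp_im] using h1
  · have hkey : x * Real.sin y + y * Real.cos y = 0 := by
      rw [hxdef]; field_simp; ring
    have h1 : x * (Real.exp x * Real.sin y) + y * (Real.exp x * Real.cos y) = 0 := by
      calc x * (Real.exp x * Real.sin y) + y * (Real.exp x * Real.cos y)
          = Real.exp x * (x * Real.sin y + y * Real.cos y) := by ring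
        _ = 0 := by rw [hkey]; ring
    simpa [Complex.mul_im, Complex.exp_re, Complex.exp_im] using h1


lemma lemC (a : ℝ) (ha : Real.pi / 2 ≤ a) :
    ∃ μ : ℂ, μ * Complex.exp μ = -(a:ℂ) ∧ 0 ≤ μ.re := by
  rcases eq_or_lt_of_le ha with heq | hlt
  · refine ⟨((Real.pi/2 : ℝ):ℂ) * Complex.I, ?_, by simp⟩
    rw [Complex.exp_mul_I, ← Complex.ofReal_cos, ← Complex.ofReal_sin,
      Real.cos_pi_div_two, Real.sin_pi_div_two, ← heq]
    simp [mul_assoc, Complex.I_mul_I]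
  · obtain ⟨μ, h1, h2⟩ := lemB a hlt
    exact ⟨μ, h1, h2.le⟩

lemma conv (v τ : ℝ) (hτ : 0 < τ) (μ : ℂ) (hμ : μ * Complex.exp μ = -(((v*τ:ℝ)):ℂ)) :
    ∃ l : ℂ, l * Complex.exp (l * (τ:ℂ)) = -(v:ℂ) ∧ l.re = μ.re / τ := by
  have hτ0 : (τ:ℂ) ≠ 0 := by exact_mod_cast hτ.ne'
  refine ⟨μ / τ, ?_, ?_⟩
  · have h1 : μ / τ * (τ:ℂ) = μ := by field_simp
    rw [h1]
    calc μ / τ * Complex.exp μ = (μ * Complex.exp μ) / τ := by ring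
    _ = -(((v*τ:ℝ)):ℂ) / τ := by rw [hμ]
    _ = -(v:ℂ) := by push_cast; field_simp
  · simp [Complex.div_ofReal_re]

/-- For `v > 0`, `τ > 0`, every complex root of `λ * exp(λ * τ) = -v` has strictly negative
real part if and only if `v * τ < π / 2`. In particular, when `v * τ > π / 2` there exists a
root with positive real part, and when `v * τ < π / 2` all roots have negative real part. -/
theorem stmt_2 (v τ : ℝ) (hv : 0 < v) (hτ : 0 < τ) :
    ((∀ l : ℂ, l * Complex.exp (l * (τ : ℂ)) = -(v : ℂ) → l.re < 0) ↔ v * τ < Real.pi / 2) ∧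
    (Real.pi / 2 < v * τ →
      ∃ l : ℂ, l * Complex.exp (l * (τ : ℂ)) = -(v : ℂ) ∧ 0 < l.re) := by
  have hpi := Real.pi_pos
  constructor
  · constructor
    · intro h
      by_contra hle
      push_neg at hle
      obtain ⟨μ, hμ, hμre⟩ := lemC (v * τ) hle
      obtain ⟨l, hl, hlre⟩ := conv v τ hτ μ hμ
      have := h l hl
      rw [hlre] at this
      have : μ.re < 0 := by
        by_contra hc
        push_neg at hc
        have := div_nonneg hc hτ.le
        linarith
      linarith
    · intro hvt l hl
      have hμ : (l * (τ:ℂ)) * Complex.exp (l * (τ:ℂ)) = -(((v*τ:ℝ)):ℂ) := by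
        calc (l * (τ:ℂ)) * Complex.exp (l * (τ:ℂ))
            = (l * Complex.exp (l * (τ:ℂ))) * (τ:ℂ) := by ring
          _ = -(v:ℂ) * (τ:ℂ) := by rw [hl]
          _ = -(((v*τ:ℝ)):ℂ) := by push_cast; ring
      have hre := lemA (v * τ) (by positivity) hvt _ hμ
      have hmre : (l * (τ:ℂ)).re = l.re * τ := by simp [Complex.mul_re]
      rw [hmre] at hre
      nlinarith
  · intro hvt
    obtain ⟨μ, hμ, hμre⟩ := lemB (v * τ) hvt
    obtain ⟨l, hl, hlre⟩ := conv v τ hτ μ hμ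
    exact ⟨l, hl, by rw [hlre]; positivity⟩
end

section
/- Let v > 0 and let 0 < τ₁ < τ₂ with v·τ₂ ≤ 1/e. If λ₁ ∈ (−1/τ₁, 0) satisfies λ₁·exp(λ₁τ₁) = −v and λ₂ ∈ [−1/τ₂, 0) satisfies λ₂·exp(λ₂τ₂) = −v, then λ₂ < λ₁. That is, the dominant (largest) real characteristic root is strictly decreasing in the staleness τ on (0, 1/(e·v)], so a small degree of gradient staleness accelerates convergence. -/
/-- For `v > 0` and staleness values `0 < τ₁ < τ₂` with `v * τ₂ ≤ 1/e`, the dominant real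
characteristic root of `λ * exp(λ * τ) = -v` is strictly decreasing in `τ`: if
`λ₁ ∈ (-1/τ₁, 0)` solves the equation for `τ₁` and `λ₂ ∈ [-1/τ₂, 0)` solves it for `τ₂`,
then `λ₂ < λ₁`. -/
theorem stmt_3 (v τ₁ τ₂ l₁ l₂ : ℝ) (hv : 0 < v) (hτ₁ : 0 < τ₁) (hττ : τ₁ < τ₂)
    (hvτ : v * τ₂ ≤ 1 / Real.exp 1)
    (hl₁ : l₁ ∈ Set.Ioo (-1 / τ₁) 0) (he₁ : l₁ * Real.exp (l₁ * τ₁) = -v)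
    (hl₂ : l₂ ∈ Set.Ico (-1 / τ₂) 0) (he₂ : l₂ * Real.exp (l₂ * τ₂) = -v) :
    l₂ < l₁ := by
  by_contra h
  push_neg at h
  have hτ₂ : 0 < τ₂ := hτ₁.trans hττ
  obtain ⟨hl₁a, hl₁b⟩ := hl₁
  obtain ⟨hl₂a, hl₂b⟩ := hl₂
  -- -1/τ₂ > -1/τ₁
  have hinv : -1 / τ₁ < -1 / τ₂ := by
    rw [neg_div, neg_div, neg_lt_neg_iff]
    exact one_div_lt_one_div_of_lt hτ₁ hττ
  have hl₂a' : -1 / τ₁ < l₂ := hinv.trans_le hl₂a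
  -- f x = x * exp (x * τ₁) is strictly monotone on Ici (-1/τ₁)
  have hmono : StrictMonoOn (fun x : ℝ => x * Real.exp (x * τ₁)) (Set.Ici (-1 / τ₁)) := by
    have hderiv : ∀ x : ℝ, HasDerivAt (fun x : ℝ => x * Real.exp (x * τ₁))
        ((1 + x * τ₁) * Real.exp (x * τ₁)) x := by
      intro x
      have h1 : HasDerivAt (fun x : ℝ => x * τ₁) τ₁ x := by
        simpa using (hasDerivAt_id x).mul_const τ₁
      have h2 := (h1.exp)
      have h3 : HasDerivAt (fun y : ℝ => y * Real.exp (y * τ₁))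
          (1 * Real.exp (x * τ₁) + id x * (Real.exp (x * τ₁) * τ₁)) x := (hasDerivAt_id x).mul h2
      convert h3 using 1
      simp [id]
      ring
    apply strictMonoOn_of_deriv_pos (convex_Ici _)
    · exact Continuous.continuousOn (by continuity)
    · intro x hx
      rw [interior_Ici] at hx
      rw [(hderiv x).deriv]
      apply mul_pos _ (Real.exp_pos _)
      have h4 : -1 < x * τ₁ := (div_lt_iff₀ hτ₁).mp hx
      linarith
  have h1 : l₁ * Real.exp (l₁ * τ₁) ≤ l₂ * Real.exp (l₂ * τ₁) :=
    hmono.monotoneOn (le_of_lt hl₁a) (le_of_lt hl₂a') h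
  have h2 : Real.exp (l₂ * τ₂) < Real.exp (l₂ * τ₁) := by
    apply Real.exp_lt_exp.mpr
    nlinarith
  have h3 : l₂ * Real.exp (l₂ * τ₁) < l₂ * Real.exp (l₂ * τ₂) :=
    mul_lt_mul_of_neg_left h2 hl₂b
  rw [he₁, he₂] at *
  linarith
end

section
/- Let v > 0 and τ > 0 with v·τ ≤ 1/e. Every λ ∈ [−1/τ, 0) satisfying λ·exp(λτ) = −v obeys λ ≥ −e·v, with equality if and only if v·τ = 1/e. Hence the fastest achievable decay rate of the dominant characteristic root is −e·v, attained exactly at the staleness τ = 1/(e·v). -/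
/-- For `v > 0`, `τ > 0` with `v * τ ≤ 1/e`, every `λ ∈ [-1/τ, 0)` satisfying
`λ * exp(λ * τ) = -v` obeys `λ ≥ -e * v`, with equality iff `v * τ = 1/e`. -/
theorem stmt_4 (v τ : ℝ) (hv : 0 < v) (hτ : 0 < τ) (hvτ : v * τ ≤ 1 / Real.exp 1) :
    ∀ l : ℝ, l ∈ Set.Ico (-1 / τ) 0 → l * Real.exp (l * τ) = -v →
      -(Real.exp 1 * v) ≤ l ∧ (l = -(Real.exp 1 * v) ↔ v * τ = 1 / Real.exp 1) := by
  intro l hl heq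
  obtain ⟨hl1, hl2⟩ := hl
  have hlne : l ≠ 0 := ne_of_lt hl2
  have hlτ : -1 ≤ l * τ := by
    have h := mul_le_mul_of_nonneg_right hl1 hτ.le
    rwa [div_mul_cancel₀ (-1 : ℝ) hτ.ne'] at h
  have key : -(Real.exp 1 * v) = l * Real.exp (l * τ + 1) := by
    have h : l * Real.exp (l * τ + 1) = (l * Real.exp (l * τ)) * Real.exp 1 := by
      rw [Real.exp_add]; ring
    rw [h, heq]; ring
  have hexp1 : 1 ≤ Real.exp (l * τ + 1) := Real.one_le_exp (by linarith)
  have hle : -(Real.exp 1 * v) ≤ l := by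
    rw [key]
    nlinarith [hexp1, hl2]
  refine ⟨hle, ?_, ?_⟩
  · intro he
    -- l = l * exp(lτ+1) ⇒ exp(lτ+1) = 1 ⇒ lτ = -1
    have h1 : l * Real.exp (l * τ + 1) = l * 1 := by rw [← key, ← he, mul_one]
    have h2 : Real.exp (l * τ + 1) = 1 := mul_left_cancel₀ hlne h1
    have h3 : l * τ = -1 := by
      have : l * τ + 1 = 0 := Real.exp_eq_exp.mp (by rw [h2, Real.exp_zero])
      linarith
    -- v * τ = -(l*τ) * exp(lτ) = exp(-1) = 1 / e
    have h4 : l * τ * Real.exp (l * τ) = -v * τ := by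
      rw [← heq]; ring
    rw [h3] at h4
    have h5 : Real.exp (-1 : ℝ) = 1 / Real.exp 1 := by
      rw [Real.exp_neg, one_div]
    nlinarith [h4, h5]
  · intro hvt
    -- v*τ = 1/e ⇒ lτ = -1
    have h4 : l * τ * Real.exp (l * τ) = -(1 / Real.exp 1) := by
      rw [← hvt]
      have : l * τ * Real.exp (l * τ) = (l * Real.exp (l * τ)) * τ := by ring
      rw [this, heq]; ring
    have h3 : l * τ = -1 := by
      by_contra hne
      set u : ℝ := -(l * τ) with hu
      have hune : u - 1 ≠ 0 := by
        intro h; apply hne; rw [hu] at h; linarith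
      have hstrict : u < Real.exp (u - 1) := by
        have := Real.add_one_lt_exp hune
        linarith
      have hpos : (0:ℝ) < Real.exp (-u) := Real.exp_pos _
      have h6 : u * Real.exp (-u) < Real.exp (u - 1) * Real.exp (-u) :=
        mul_lt_mul_of_pos_right hstrict hpos
      have h7 : Real.exp (u - 1) * Real.exp (-u) = Real.exp (-1 : ℝ) := by
        rw [← Real.exp_add]; ring_nf
      have h8 : u * Real.exp (-u) = 1 / Real.exp 1 := by
        have : -(l * τ) * Real.exp (l * τ) = 1 / Real.exp 1 := by linarith [h4]
        rw [hu]
        simpa using this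
      have h9 : Real.exp (-1 : ℝ) = 1 / Real.exp 1 := by
        rw [Real.exp_neg, one_div]
      rw [h7, h9, h8] at h6
      exact lt_irrefl _ h6
    rw [key, h3]
    norm_num
end

section
/- Let v < 0. There exist constants C > 0 and δ > 0 such that for every τ ∈ (0, δ) and every λ > 0 with λ·exp(λτ) = −v, one has |λ − (−v)·(1 + v·τ)| ≤ C·τ². That is, the positive characteristic root admits the expansion λ = −v(1 + vτ) + O(τ²) as τ → 0⁺. -/
/-- For `v < 0`, the positive characteristic root of `λ * exp(λ * τ) = -v` admits the
expansion `λ = -v(1 + vτ) + O(τ²)` as `τ → 0⁺`. -/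
theorem stmt_9 (v : ℝ) (hv : v < 0) :
    ∃ C > 0, ∃ δ > 0, ∀ τ ∈ Set.Ioo (0 : ℝ) δ, ∀ l : ℝ, 0 < l →
      l * Real.exp (l * τ) = -v → |l - (-v) * (1 + v * τ)| ≤ C * τ ^ 2 := by
  set μ := -v with hμdef
  have hμ : 0 < μ := by simp [hμdef]; linarith
  refine ⟨2 * μ ^ 3, by positivity, 1, one_pos, ?_⟩
  rintro τ ⟨hτ0, hτ1⟩ l hl heq
  set x := l * τ with hxdef
  have hx : 0 < x := mul_pos hl hτ0
  have hexp : 0 < Real.exp x := Real.exp_pos x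
  -- l = μ * exp(-x)
  have hle : l = μ * Real.exp (-x) := by
    rw [Real.exp_neg]
    field_simp
    linarith [heq]
  have h1 : 1 - x ≤ Real.exp (-x) := by linarith [Real.add_one_le_exp (-x)]
  have h2 : Real.exp (-x) ≤ 1 - x + x ^ 2 := by
    have hxe : 1 + x ≤ Real.exp x := by linarith [Real.add_one_le_exp x]
    have hprod : Real.exp (-x) * (1 + x) ≤ 1 := by
      calc Real.exp (-x) * (1 + x) ≤ Real.exp (-x) * Real.exp x := by
            apply mul_le_mul_of_nonneg_left hxe (le_of_lt (Real.exp_pos _))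
        _ = 1 := by rw [← Real.exp_add]; simp
    have h3 : (1 : ℝ) ≤ (1 - x + x ^ 2) * (1 + x) := by nlinarith
    nlinarith [Real.exp_pos (-x)]
  -- l ≤ μ
  have hlμ : l ≤ μ := by
    have : Real.exp (-x) ≤ 1 := by
      rw [Real.exp_le_one_iff]; linarith
    nlinarith
  have hμl : μ - l ≤ μ ^ 2 * τ := by
    have : μ - l = μ * (1 - Real.exp (-x)) := by rw [hle]; ring
    nlinarith
  have hgoal : l - μ * (1 + v * τ) = μ * Real.exp (-x) - μ + μ ^ 2 * τ := by
    rw [hle, hμdef]; ring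
  rw [abs_le]
  constructor
  · have : l - μ * (1 + v * τ) ≥ 0 := by
      rw [hgoal]
      nlinarith
    nlinarith [sq_nonneg τ]
  · rw [hgoal]
    have hll : l * l ≤ μ * μ := mul_le_mul hlμ hlμ hl.le hμ.le
    have hx2 : x ^ 2 = l ^ 2 * τ ^ 2 := by rw [hxdef]; ring
    have hA : μ * Real.exp (-x) ≤ μ * (1 - l * τ + l ^ 2 * τ ^ 2) := by
      have := mul_le_mul_of_nonneg_left h2 hμ.le
      rw [hx2] at this
      calc μ * Real.exp (-x) ≤ μ * (1 - x + l ^ 2 * τ ^ 2) := this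
        _ = μ * (1 - l * τ + l ^ 2 * τ ^ 2) := by rw [hxdef]
    nlinarith [mul_le_mul_of_nonneg_left hμl (mul_pos hμ hτ0).le,
      mul_le_mul_of_nonneg_left hll (mul_pos (mul_pos hμ hτ0) hτ0).le]
end

section
/- There exists a unique real number ϖ ∈ (−2, 0) such that (ϖ + 2)·exp(−(ϖ + 2)) = 2·exp(−2); moreover this ϖ satisfies 2ϖ·(exp(−ϖ) − 1) + ϖ²·exp(−ϖ) = 0, i.e., it is a critical point of g(ω) = ω²/(exp(−ω) − 1). -/
noncomputable def hfun (w : ℝ) : ℝ := (w + 2) * Real.exp (-w) - 2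

lemma hfun_deriv (w : ℝ) : HasDerivAt hfun (-(w + 1) * Real.exp (-w)) w := by
  have h1 : HasDerivAt (fun w : ℝ => Real.exp (-w)) (-Real.exp (-w)) w := by
    simpa [Function.comp_def] using (Real.hasDerivAt_exp (-w)).comp w (hasDerivAt_neg w)
  have h2 : HasDerivAt (fun w : ℝ => w + 2) 1 w := by
    simpa using (hasDerivAt_id w).add_const (2 : ℝ)
  have h3 := (h2.mul h1).sub_const (2 : ℝ)
  convert h3 using 1
  · rfl
  · rfl
  · rfl
  · ring

lemma eq_iff' (w : ℝ) :
    (w + 2) * Real.exp (-(w + 2)) = 2 * Real.exp (-2) ↔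
    (w + 2) * Real.exp (-w) = 2 := by
  have hx : Real.exp (-(w + 2)) = Real.exp (-w) * Real.exp (-2) := by
    rw [← Real.exp_add]; ring_nf
  rw [hx]
  constructor
  · intro hh
    apply mul_right_cancel₀ (Real.exp_ne_zero (-2 : ℝ))
    linarith [hh]
  · intro hh
    rw [← mul_assoc, hh]

lemma hfun_mono : StrictMonoOn hfun (Set.Icc (-2 : ℝ) (-1)) := by
  apply StrictMonoOn.mono (s := Set.Icc (-2 : ℝ) (-1))
  · apply strictMonoOn_of_deriv_pos (convex_Icc _ _)
    · exact (Continuous.continuousOn (by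
        have : Continuous hfun := by
          unfold hfun; continuity
        exact this))
    · intro x hx
      rw [interior_Icc] at hx
      rw [(hfun_deriv x).deriv]
      have h1 : x + 1 < 0 := by linarith [hx.2]
      have := Real.exp_pos (-x)
      nlinarith
  · exact le_refl _

lemma hfun_anti : StrictAntiOn hfun (Set.Icc (-1 : ℝ) 0) := by
  apply strictAntiOn_of_deriv_neg (convex_Icc _ _)
  · exact Continuous.continuousOn (by unfold hfun; continuity)
  · intro x hx
    rw [interior_Icc] at hx
    rw [(hfun_deriv x).deriv]
    have h1 : x + 1 > 0 := by linarith [hx.1]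
    have := Real.exp_pos (-x)
    nlinarith

lemma hfun_root_lt (y : ℝ) (hy : y ∈ Set.Ioo (-2 : ℝ) 0) (h0 : hfun y = 0) :
    y ∈ Set.Ioo (-2 : ℝ) (-1) := by
  refine ⟨hy.1, ?_⟩
  by_contra h
  push_neg at h
  have hy0 : hfun 0 = 0 := by
    simp [hfun]
  have : hfun y > hfun 0 :=
    hfun_anti ⟨h, le_of_lt hy.2⟩ ⟨by norm_num, le_refl 0⟩ hy.2
  rw [hy0, h0] at this
  exact lt_irrefl 0 this

/-- There is a unique `ϖ ∈ (-2, 0)` with `(ϖ + 2) exp(-(ϖ + 2)) = 2 exp(-2)`; moreover any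
such `ϖ` satisfies `2ϖ(exp(-ϖ) - 1) + ϖ² exp(-ϖ) = 0`, i.e. it is a critical point of
`g(ω) = ω² / (exp(-ω) - 1)`. -/
theorem stmt_12 :
    (∃! w : ℝ, w ∈ Set.Ioo (-2 : ℝ) 0 ∧
      (w + 2) * Real.exp (-(w + 2)) = 2 * Real.exp (-2)) ∧
    (∀ w : ℝ, w ∈ Set.Ioo (-2 : ℝ) 0 →
      (w + 2) * Real.exp (-(w + 2)) = 2 * Real.exp (-2) →
      2 * w * (Real.exp (-w) - 1) + w ^ 2 * Real.exp (-w) = 0) := by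
  constructor
  · -- existence and uniqueness
    have hcont : ContinuousOn hfun (Set.Icc (-2 : ℝ) (-1)) :=
      Continuous.continuousOn (by unfold hfun; continuity)
    have hm2 : hfun (-2) = -2 := by simp [hfun]
    have hm1 : hfun (-1) = Real.exp 1 - 2 := by norm_num [hfun]
    have he : (2 : ℝ) < Real.exp 1 := by
      have := Real.exp_one_gt_d9
      linarith
    have hiv : (0 : ℝ) ∈ Set.Ioo (hfun (-2)) (hfun (-1)) := by
      rw [hm2, hm1]; constructor <;> linarith
    obtain ⟨c, hc, hc0⟩ := intermediate_value_Ioo (by norm_num : (-2 : ℝ) ≤ -1) hcont hiv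
    refine ⟨c, ⟨⟨hc.1, by linarith [hc.2]⟩, ?_⟩, ?_⟩
    · rw [eq_iff']
      have : (c + 2) * Real.exp (-c) - 2 = 0 := hc0
      linarith
    · rintro y ⟨hy, hyeq⟩
      rw [eq_iff'] at hyeq
      have hy0 : hfun y = 0 := by unfold hfun; linarith
      have hy' := hfun_root_lt y hy hy0
      have hc' : c ∈ Set.Ioo (-2 : ℝ) (-1) := hc
      exact hfun_mono.injOn ⟨le_of_lt hy'.1, le_of_lt hy'.2⟩
        ⟨le_of_lt hc'.1, le_of_lt hc'.2⟩ (by rw [hy0, hc0])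
  · intro w _ heq
    rw [eq_iff'] at heq
    have h2 : w * ((w + 2) * Real.exp (-w)) = w * 2 := by rw [heq]
    nlinarith [h2]
end

section
/- Let ζ > 0 and θ > 0 with ζ·θ ≤ π. Then the purely imaginary number λ = iθ satisfies the characteristic equation ζ·λ² = exp(−ζλ) − 1 (with exp the complex exponential) if and only if ζ = π²/2 and θ = 2/π. -/
/-- For `ζ > 0`, `θ > 0` with `ζ θ ≤ π`, the purely imaginary number `λ = i θ` satisfies the
characteristic equation `ζ λ² = exp(-ζ λ) - 1` if and only if `ζ = π²/2` and `θ = 2/π`. -/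
theorem stmt_13 (ζ θ : ℝ) (hζ : 0 < ζ) (hθ : 0 < θ) (h : ζ * θ ≤ Real.pi) :
    (ζ : ℂ) * (Complex.I * (θ : ℂ)) ^ 2 =
        Complex.exp (-(ζ : ℂ) * (Complex.I * (θ : ℂ))) - 1 ↔
    (ζ = Real.pi ^ 2 / 2 ∧ θ = 2 / Real.pi) := by
  have hkey : -(ζ : ℂ) * (Complex.I * (θ : ℂ)) = ((-(ζ * θ) : ℝ) : ℂ) * Complex.I := by
    push_cast; ring
  rw [hkey, Complex.exp_mul_I, Complex.ext_iff]
  simp only [Complex.add_re, Complex.add_im, Complex.sub_re, Complex.sub_im,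
    Complex.mul_re, Complex.mul_im, Complex.I_re, Complex.I_im, Complex.one_re, Complex.one_im,
    Complex.cos_ofReal_re, Complex.cos_ofReal_im, Complex.sin_ofReal_re, Complex.sin_ofReal_im,
    Complex.ofReal_re, Complex.ofReal_im]
  rw [Real.cos_neg, Real.sin_neg]
  constructor
  · rintro ⟨h1, h2⟩
    simp only [pow_two] at h1 h2
    simp only [Complex.mul_re, Complex.mul_im, Complex.I_re, Complex.I_im,
      Complex.ofReal_re, Complex.ofReal_im] at h1 h2
    ring_nf at h1 h2
    -- h2 should give sin (ζ*θ) = 0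
    have hs : Real.sin (ζ * θ) = 0 := by linarith
    have hpi : ζ * θ = Real.pi := by
      rcases lt_or_eq_of_le h with hlt | heq
      · exfalso
        have := Real.sin_pos_of_pos_of_lt_pi (mul_pos hζ hθ) hlt
        linarith
      · exact heq
    have hc : Real.cos (ζ * θ) = -1 := by rw [hpi, Real.cos_pi]
    rw [hc] at h1
    have h2' : ζ * θ ^ 2 = 2 := by nlinarith
    have hpi0 := Real.pi_pos
    constructor
    · have : θ = Real.pi / ζ := by field_simp at hpi ⊢; linarith
      rw [this] at h2'
      field_simp at h2'
      nlinarith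
    · have hζval : ζ = Real.pi ^ 2 / 2 := by
        have : θ = Real.pi / ζ := by field_simp at hpi ⊢; linarith
        rw [this] at h2'
        field_simp at h2'
        nlinarith
      rw [hζval] at hpi
      field_simp at hpi
      have h4 : Real.pi * (Real.pi * θ) = Real.pi * 2 := by linear_combination Real.pi * hpi
      have h5 := mul_left_cancel₀ (ne_of_gt hpi0) h4
      rw [eq_div_iff (ne_of_gt hpi0)]
      linarith
  · rintro ⟨h1, h2⟩
    subst h1 h2
    have hpi0 := Real.pi_pos
    have hmul : Real.pi ^ 2 / 2 * (2 / Real.pi) = Real.pi := by field_simp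
    rw [hmul, Real.cos_pi, Real.sin_pi]
    simp only [pow_two, Complex.mul_re, Complex.mul_im, Complex.I_re, Complex.I_im,
      Complex.ofReal_re, Complex.ofReal_im]
    constructor <;> [skip; ring_nf]
    · field_simp
      ring
end

section
/- Let K, B, J be natural numbers with B ≤ K, and let A : ℕ → Finset (Fin K) be any sequence of sets of workers with card(A_j) = B for every j (the B workers whose gradients trigger the j-th update). Define s : Fin K → ℕ → ℕ by s(κ, 0) = 0 and s(κ, j+1) = s(κ, j) if κ ∈ A_{j+1}, and s(κ, j+1) = s(κ, j) + B otherwise. Then Σ_{κ} s(κ, J) = (K − B)·B·J. Consequently, since BJ gradients are received in J iterations, the average step staleness per received gradient in B-ASGD without gradient dropout equals K − B. -/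
/-- In `B`-ASGD with `K` workers and any sequence of triggering sets `A j` of size `B`, the
staleness accumulator `s`, defined by `s κ 0 = 0`, `s κ (j+1) = s κ j` if `κ ∈ A (j+1)` and
`s κ (j+1) = s κ j + B` otherwise, satisfies `∑ κ, s κ J = (K - B) * B * J`; hence the
average step staleness per received gradient equals `K - B`. -/
theorem stmt_14 (K B J : ℕ) (hBK : B ≤ K) (A : ℕ → Finset (Fin K))
    (hA : ∀ j, (A j).card = B)
    (s : Fin K → ℕ → ℕ)
    (hs0 : ∀ κ, s κ 0 = 0)
    (hs : ∀ κ j, s κ (j + 1) = if κ ∈ A (j + 1) then s κ j else s κ j + B) :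
    ∑ κ : Fin K, s κ J = (K - B) * B * J := by
  induction J with
  | zero => simp [hs0]
  | succ j ih =>
    have key : ∑ κ : Fin K, (if κ ∈ A (j + 1) then (0 : ℕ) else B) = (K - B) * B := by
      rw [Finset.sum_ite, Finset.sum_const_zero, Finset.sum_const, zero_add, smul_eq_mul,
        Finset.filter_not, Finset.filter_mem_eq_inter, Finset.univ_inter,
        Finset.card_sdiff_of_subset (Finset.subset_univ _), hA, Finset.card_univ, Fintype.card_fin]
    calc ∑ κ : Fin K, s κ (j + 1)
        = ∑ κ : Fin K, (s κ j + (if κ ∈ A (j + 1) then 0 else B)) := by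
          refine Finset.sum_congr rfl fun κ _ => ?_
          rw [hs κ j]
          by_cases h : κ ∈ A (j + 1) <;> simp [h]
      _ = (K - B) * B * j + (K - B) * B := by
          rw [Finset.sum_add_distrib, ih, key]
      _ = (K - B) * B * (j + 1) := by ring
end
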